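/- Faulhaber's theorem: for every integer k ≥ 1 there exists a polynomial F ∈ ℚ[t] such that for all integers n ≥ 1, Σ_{q=1}^{n} q^{2k+1} = F(n(n+1)). -/

import Mathlib

open Finset Polynomial

lemma binom_diff (x : ℚ) (k : ℕ) :
    x ^ (k+1) * ((x+1)^(k+1) - (x-1)^(k+1)) =
    ∑ m ∈ range (k+2), (if Odd (k+1-m) then 2*((k+1).choose m : ℚ) else 0) * x^(k+1+m) := by
  rw [add_pow, sub_eq_add_neg x, add_pow, ← Finset.sum_sub_distrib, Finset.mul_sum]
  apply Finset.sum_congr rfl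
  intro m hm
  rcases Nat.even_or_odd (k+1-m) with he | ho
  · simp [Nat.not_odd_iff_even.mpr he, he.neg_one_pow]
  · simp only [ho, if_true, ho.neg_one_pow, one_pow, mul_one]
    ring

lemma icc_pow (p n : ℕ) :
    (∑ q ∈ Icc 1 n, (q:ℚ)^p) = ∑ i ∈ range n, ((i:ℚ)+1)^p := by
  rw [← Finset.Ico_add_one_right_eq_Icc, Finset.sum_Ico_eq_sum_range]
  simp [add_comm]

lemma tele (k n : ℕ) :
    ((n:ℚ) * ((n:ℚ)+1))^(k+1) =
    ∑ m ∈ range (k+2), (if Odd (k+1-m) then 2*((k+1).choose m : ℚ) else 0) *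
      ∑ q ∈ Icc 1 n, (q:ℚ)^(k+1+m) := by
  have h := Finset.sum_range_sub (fun q : ℕ => ((q:ℚ) * ((q:ℚ)+1))^(k+1)) n
  simp only [Nat.cast_zero, zero_mul, zero_add, ne_eq] at h
  rw [zero_pow (by omega), sub_zero] at h
  rw [← h]
  have hterm : ∀ i : ℕ,
      (((i+1:ℕ):ℚ) * (((i+1:ℕ):ℚ)+1))^(k+1) - ((i:ℚ) * ((i:ℚ)+1))^(k+1) =
      ∑ m ∈ range (k+2), (if Odd (k+1-m) then 2*((k+1).choose m : ℚ) else 0) * ((i:ℚ)+1)^(k+1+m) := by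
    intro i
    have h1 : ((i:ℚ)+1)+1 = (i:ℚ)+2 := by ring
    have h2 : ((i:ℚ)+1)-1 = (i:ℚ) := by ring
    rw [← binom_diff ((i:ℚ)+1) k, h1, h2]
    push_cast
    rw [mul_pow, mul_pow]
    ring
  calc (∑ i ∈ range n, ((((i+1:ℕ):ℚ) * (((i+1:ℕ):ℚ)+1))^(k+1) - ((i:ℚ) * ((i:ℚ)+1))^(k+1)))
      = ∑ i ∈ range n, ∑ m ∈ range (k+2),
          (if Odd (k+1-m) then 2*((k+1).choose m : ℚ) else 0) * ((i:ℚ)+1)^(k+1+m) := by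
        exact Finset.sum_congr rfl fun i _ => hterm i
    _ = _ := by
        rw [Finset.sum_comm]
        exact Finset.sum_congr rfl fun m _ => by rw [← Finset.mul_sum, icc_pow]

lemma faulhaber_aux : ∀ k : ℕ, ∃ F : Polynomial ℚ, ∀ n : ℕ,
    (∑ q ∈ Icc 1 n, (q:ℚ)^(2*k+1)) = F.eval ((n:ℚ) * ((n:ℚ)+1)) := by
  intro k
  induction k using Nat.strong_induction_on with
  | _ k ih =>
    choose! G hG using ih
    refine ⟨Polynomial.C (1/(2*((k:ℚ)+1))) *
      (X^(k+1) - ∑ m ∈ range k,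
        Polynomial.C (if Odd (k+1-m) then 2*((k+1).choose m : ℚ) else 0) * G ((k+m)/2)), ?_⟩
    intro n
    have ht := tele k n
    rw [Finset.sum_range_succ, Finset.sum_range_succ] at ht
    have hk1 : ¬ Odd (k+1-(k+1)) := by simp
    have hkk : k+1-k = 1 := by omega
    rw [if_neg hk1] at ht
    rw [hkk, if_pos (by decide : Odd 1), Nat.choose_succ_self_right] at ht
    have hexp : k + 1 + k = 2*k+1 := by omega
    rw [hexp] at ht
    -- ht : a^(k+1) = (∑ m ∈ range k, c m * T (k+1+m)) + 2*(k+1)*T(2k+1) + 0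
    have hsum : (∑ m ∈ range k, (if Odd (k+1-m) then 2*((k+1).choose m : ℚ) else 0) *
          ∑ q ∈ Icc 1 n, (q:ℚ)^(k+1+m))
        = ∑ m ∈ range k, (if Odd (k+1-m) then 2*((k+1).choose m : ℚ) else 0) *
          (G ((k+m)/2)).eval ((n:ℚ) * ((n:ℚ)+1)) := by
      apply Finset.sum_congr rfl
      intro m hm
      have hmk : m < k := Finset.mem_range.mp hm
      by_cases ho : Odd (k+1-m)
      · obtain ⟨t, htt⟩ := ho
        have he1 : k + 1 + m = 2 * ((k+m)/2) + 1 := by omega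
        have he2 : (k+m)/2 < k := by omega
        rw [he1, hG ((k+m)/2) he2 n]
      · rw [if_neg ho, zero_mul, zero_mul]
    rw [hsum] at ht
    rw [Polynomial.eval_mul, Polynomial.eval_C, Polynomial.eval_sub, Polynomial.eval_pow,
      Polynomial.eval_X, Polynomial.eval_finset_sum]
    simp only [Polynomial.eval_mul, Polynomial.eval_C]
    rw [ht]
    have h2 : (2*((k:ℚ)+1)) ≠ 0 := by positivity
    push_cast
    field_simp
    ring

theorem faulhaber (k : ℕ) (hk : 1 ≤ k) :
    ∃ F : Polynomial ℚ, ∀ n : ℕ, 1 ≤ n →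
      (∑ q ∈ Finset.Icc 1 n, (q : ℚ) ^ (2 * k + 1)) = F.eval ((n : ℚ) * ((n : ℚ) + 1)) := by
  obtain ⟨F, hF⟩ := faulhaber_aux k
  exact ⟨F, fun n _ => hF n⟩
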